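/- For every f in BV(T) ∩ H^{-1}_av(T), one has ||f||_{H^{-1}_av(T)} ≤ (1/(2π)) ∫_T |Df|, i.e., the H^{-1}_av norm is bounded by 1/(2π) times the total variation of f. -/

import Mathlib

open Real MeasureTheory

/-- For `f ∈ BV(𝕋) ∩ H⁻¹_av(𝕋)` (here: a 1-periodic function of
bounded variation on `[0,1]` with zero mean), the `H⁻¹_av` norm, expressed via the
Fourier coefficients `c ξ = ∫_0^1 f(x) e^{-2πiξx} dx`, is bounded by `1/(2π)` times
the total variation of `f`. -/
theorem stmt2 (f : ℝ → ℝ)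
    (hper : Function.Periodic f 1)
    (hint : IntegrableOn f (Set.Icc 0 1))
    (hmean : ∫ x in Set.Icc (0:ℝ) 1, f x = 0)
    (hBV : eVariationOn f (Set.Icc 0 1) ≠ ⊤)
    (c : ℤ → ℂ)
    (hc : ∀ ξ : ℤ, c ξ =
      ∫ x in (0:ℝ)..1, (f x : ℂ) * Complex.exp (-2 * π * Complex.I * (ξ : ℂ) * (x : ℂ))) :
    Real.sqrt (∑' ξ : {ξ : ℤ // ξ ≠ 0},
        (1 / (4 * π ^ 2)) * (‖c ξ‖ ^ 2 / ((ξ : ℤ) : ℝ) ^ 2)) ≤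
      (1 / (2 * π)) * (eVariationOn f (Set.Icc 0 1)).toReal := by
  haveI : Fact ((0:ℝ) < 1) := ⟨one_pos⟩
  have hπ : (0:ℝ) < π := Real.pi_pos
  set V : ℝ := (eVariationOn f (Set.Icc 0 1)).toReal with hVdef
  have hV0 : 0 ≤ V := ENNReal.toReal_nonneg
  -- the restricted measure is nontrivial
  haveI hne : (ae (volume.restrict (Set.Icc (0:ℝ) 1))).NeBot := by
    rw [ae_neBot]
    intro h
    have := congrArg (fun μ : Measure ℝ => μ (Set.Icc 0 1)) h
    simp [Measure.restrict_apply, Real.volume_Icc] at this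
  -- existence of a point where f ≤ 0
  have hex_le : ∃ y ∈ Set.Icc (0:ℝ) 1, f y ≤ 0 := by
    by_contra h
    push_neg at h
    have hnn : 0 ≤ᵐ[volume.restrict (Set.Icc (0:ℝ) 1)] f :=
      (ae_restrict_iff' measurableSet_Icc).2 (Filter.Eventually.of_forall fun y hy => (h y hy).le)
    have hz := (integral_eq_zero_iff_of_nonneg_ae hnn hint).1 hmean
    obtain ⟨y, hy0, hymem⟩ := (hz.and (ae_restrict_mem measurableSet_Icc)).exists
    exact absurd hy0 (ne_of_gt (h y hymem))
  have hex_ge : ∃ y ∈ Set.Icc (0:ℝ) 1, 0 ≤ f y := by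
    by_contra h
    push_neg at h
    have hnn : 0 ≤ᵐ[volume.restrict (Set.Icc (0:ℝ) 1)] (-f) :=
      (ae_restrict_iff' measurableSet_Icc).2 (Filter.Eventually.of_forall fun y hy => by
        simpa using (h y hy).le)
    have hmean' : ∫ x in Set.Icc (0:ℝ) 1, (-f) x = 0 := by
      simp [integral_neg, hmean]
    have hz := (integral_eq_zero_iff_of_nonneg_ae hnn hint.neg).1 hmean'
    obtain ⟨y, hy0, hymem⟩ := (hz.and (ae_restrict_mem measurableSet_Icc)).exists
    have : f y = 0 := by simpa using hy0
    exact absurd this (ne_of_lt (h y hymem))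
  -- distance bound from the variation
  have hdist : ∀ x ∈ Set.Icc (0:ℝ) 1, ∀ y ∈ Set.Icc (0:ℝ) 1, dist (f x) (f y) ≤ V := by
    intro x hx y hy
    have h1 := eVariationOn.edist_le f hx hy
    have h2 := ENNReal.toReal_mono hBV h1
    rwa [← dist_edist] at h2
  -- pointwise bound
  have hbound : ∀ x ∈ Set.Icc (0:ℝ) 1, |f x| ≤ V := by
    intro x hx
    obtain ⟨y, hy, hfy⟩ := hex_le
    obtain ⟨y', hy', hfy'⟩ := hex_ge
    rw [abs_le]
    constructor
    · have := hdist x hx y' hy'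
      rw [Real.dist_eq] at this
      have := neg_abs_le (f x - f y')
      nlinarith [abs_le.1 (abs_abs (f x - f y') ▸ le_refl (|f x - f y'|))]
    · have h := hdist x hx y hy
      rw [Real.dist_eq] at h
      have := le_abs_self (f x - f y)
      linarith
  -- the lifted function on the circle
  set g : ℝ → ℂ := fun x => (f x : ℂ) with hgdef
  have hgper : Function.Periodic g 1 := fun x => by simp [hgdef, hper x]
  set F : AddCircle (1:ℝ) → ℂ := hgper.lift with hFdef
  have hFcoe : ∀ x : ℝ, F (x : AddCircle (1:ℝ)) = g x := fun x => hgper.lift_coe x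
  have hFnorm : ∀ z, ‖F z‖ ≤ V := by
    intro z
    obtain ⟨b, hb, rfl⟩ := AddCircle.eq_coe_Ico z
    rw [hFcoe]
    simpa [hgdef, Complex.norm_real] using hbound b ⟨hb.1, hb.2.le⟩
  -- measurability of F
  obtain ⟨p, q, hp, hq, hpq⟩ :=
    LocallyBoundedVariationOn.exists_monotoneOn_sub_monotoneOn
      (BoundedVariationOn.locallyBoundedVariationOn hBV)
  have hsub : Set.Ioc (0:ℝ) (0+1) ⊆ Set.Icc 0 1 := by
    rw [zero_add]; exact Set.Ioc_subset_Icc_self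
  have hmeasF : Measurable F := by
    have hpm : Monotone fun x : Set.Ioc (0:ℝ) (0+1) => p x :=
      fun a b hab => hp (hsub a.2) (hsub b.2) hab
    have hqm : Monotone fun x : Set.Ioc (0:ℝ) (0+1) => q x :=
      fun a b hab => hq (hsub a.2) (hsub b.2) hab
    have hfsub : Measurable fun x : Set.Ioc (0:ℝ) (0+1) => f x := by
      have : (fun x : Set.Ioc (0:ℝ) (0+1) => f x)
          = fun x : Set.Ioc (0:ℝ) (0+1) => p x - q x := by
        funext x; rw [hpq]; simp
      rw [this]
      exact hpm.measurable.sub hqm.measurable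
    have hFeq : F = (fun x : Set.Ioc (0:ℝ) (0+1) => g x) ∘ (AddCircle.measurableEquivIoc 1 0) := by
      funext z
      have hz : (((AddCircle.equivIoc 1 0 z : Set.Ioc (0:ℝ) (0+1)) : ℝ) : AddCircle (1:ℝ)) = z := by
        exact (AddCircle.equivIoc 1 0).symm_apply_apply z
      calc F z = F (((AddCircle.equivIoc 1 0 z : Set.Ioc (0:ℝ) (0+1)) : ℝ) : AddCircle (1:ℝ)) := by
            rw [hz]
        _ = g ((AddCircle.equivIoc 1 0 z : Set.Ioc (0:ℝ) (0+1)) : ℝ) := hFcoe _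
        _ = _ := rfl
    rw [hFeq]
    exact (Complex.measurable_ofReal.comp hfsub).comp
      (AddCircle.measurableEquivIoc 1 0).measurable
  have hmemF : MemLp F 2 (AddCircle.haarAddCircle) :=
    MemLp.of_bound hmeasF.aestronglyMeasurable V (Filter.Eventually.of_forall hFnorm)
  set G : Lp ℂ 2 (AddCircle.haarAddCircle (T := 1)) := hmemF.toLp F with hGdef
  have hGF : ∀ n : ℤ, fourierCoeff (G : AddCircle (1:ℝ) → ℂ) n = fourierCoeff F n := by
    intro n
    unfold fourierCoeff
    apply integral_congr_ae
    filter_upwards [hmemF.coeFn_toLp] with t ht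
    rw [ht]
  -- identify c with the Fourier coefficients of F
  have hc_eq : ∀ ξ : ℤ, c ξ = fourierCoeff F ξ := by
    intro ξ
    rw [fourierCoeff_eq_intervalIntegral F ξ 0, hc ξ, zero_add, one_div_one, one_smul]
    apply intervalIntegral.integral_congr
    intro x hx
    dsimp only
    rw [hFcoe x, smul_eq_mul, fourier_coe_apply, mul_comm]
    congr 1
    push_cast
    ring_nf
  -- Parseval and the L² bound
  have hPar := tsum_sq_fourierCoeff G
  have hL2 : (∫ t : AddCircle (1:ℝ), ‖(G : AddCircle (1:ℝ) → ℂ) t‖ ^ 2 ∂AddCircle.haarAddCircle) ≤ V ^ 2 := by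
    have h1 : ∀ᵐ t ∂(AddCircle.haarAddCircle (T := 1)), ‖(G : AddCircle (1:ℝ) → ℂ) t‖ ^ 2 ≤ V ^ 2 := by
      filter_upwards [hmemF.coeFn_toLp] with t ht
      rw [ht]
      exact pow_le_pow_left₀ (norm_nonneg _) (hFnorm t) 2
    calc (∫ t : AddCircle (1:ℝ), ‖(G : AddCircle (1:ℝ) → ℂ) t‖ ^ 2 ∂AddCircle.haarAddCircle)
        ≤ ∫ _ : AddCircle (1:ℝ), V ^ 2 ∂AddCircle.haarAddCircle :=
          integral_mono_of_nonneg (Filter.Eventually.of_forall fun t => sq_nonneg _)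
            (integrable_const _) h1
      _ = V ^ 2 := by simp
  -- summability of the Fourier coefficients squared
  have hsum : Summable fun i : ℤ => ‖fourierCoeff (G : AddCircle (1:ℝ) → ℂ) i‖ ^ 2 := by
    have h1 := (lp.memℓp ((fourierBasis (T := 1)).repr G)).summable
      (p := 2) (by norm_num)
    have h2 : ∀ i : ℤ, ‖((fourierBasis (T := 1)).repr G : ℤ → ℂ) i‖ ^ (2:ENNReal).toReal
        = ‖fourierCoeff (G : AddCircle (1:ℝ) → ℂ) i‖ ^ 2 := by
      intro i
      rw [fourierBasis_repr]
      norm_num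
    simpa only [h2] using h1
  -- put it together
  have hterm : ∀ ξ : {ξ : ℤ // ξ ≠ 0},
      (1 / (4 * π ^ 2)) * (‖c ξ‖ ^ 2 / ((ξ : ℤ) : ℝ) ^ 2)
        ≤ (1 / (4 * π ^ 2)) * ‖fourierCoeff (G : AddCircle (1:ℝ) → ℂ) (ξ : ℤ)‖ ^ 2 := by
    intro ξ
    rw [hc_eq, ← hGF]
    have h1 : (1:ℝ) ≤ |((ξ : ℤ) : ℝ)| := by
      exact_mod_cast Int.one_le_abs (by exact_mod_cast ξ.2 : (ξ:ℤ) ≠ 0)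
    have h2 : (1:ℝ) ≤ ((ξ : ℤ) : ℝ) ^ 2 := by
      rw [← sq_abs]; nlinarith
    have := div_le_self (sq_nonneg ‖fourierCoeff (G : AddCircle (1:ℝ) → ℂ) (ξ : ℤ)‖) h2
    have hpos : (0:ℝ) ≤ 1 / (4 * π ^ 2) := by positivity
    exact mul_le_mul_of_nonneg_left this hpos
  have hsum_sub : Summable (fun ξ : {ξ : ℤ // ξ ≠ 0}
      => ‖fourierCoeff (G : AddCircle (1:ℝ) → ℂ) (ξ : ℤ)‖ ^ 2) :=
    hsum.subtype _
  have hS : (∑' ξ : {ξ : ℤ // ξ ≠ 0},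
      (1 / (4 * π ^ 2)) * (‖c ξ‖ ^ 2 / ((ξ : ℤ) : ℝ) ^ 2)) ≤ (1 / (4 * π ^ 2)) * V ^ 2 := by
    have hsumL : Summable (fun ξ : {ξ : ℤ // ξ ≠ 0} =>
        (1 / (4 * π ^ 2)) * (‖c ξ‖ ^ 2 / ((ξ : ℤ) : ℝ) ^ 2)) := by
      apply Summable.of_nonneg_of_le (fun ξ => by positivity) hterm (hsum_sub.mul_left _)
    calc (∑' ξ : {ξ : ℤ // ξ ≠ 0}, (1 / (4 * π ^ 2)) * (‖c ξ‖ ^ 2 / ((ξ : ℤ) : ℝ) ^ 2))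
        ≤ ∑' ξ : {ξ : ℤ // ξ ≠ 0},
            (1 / (4 * π ^ 2)) * ‖fourierCoeff (G : AddCircle (1:ℝ) → ℂ) (ξ : ℤ)‖ ^ 2 :=
          Summable.tsum_le_tsum hterm hsumL (hsum_sub.mul_left _)
      _ = (1 / (4 * π ^ 2)) * ∑' ξ : {ξ : ℤ // ξ ≠ 0},
            ‖fourierCoeff (G : AddCircle (1:ℝ) → ℂ) (ξ : ℤ)‖ ^ 2 := tsum_mul_left
      _ ≤ (1 / (4 * π ^ 2)) * ∑' i : ℤ, ‖fourierCoeff (G : AddCircle (1:ℝ) → ℂ) i‖ ^ 2 := by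
          apply mul_le_mul_of_nonneg_left _ (by positivity)
          exact Summable.tsum_subtype_le _ {ξ : ℤ | ξ ≠ 0} (fun i => sq_nonneg _) hsum
      _ ≤ (1 / (4 * π ^ 2)) * V ^ 2 := by
          apply mul_le_mul_of_nonneg_left _ (by positivity)
          rw [hPar]; exact hL2
  calc Real.sqrt (∑' ξ : {ξ : ℤ // ξ ≠ 0},
        (1 / (4 * π ^ 2)) * (‖c ξ‖ ^ 2 / ((ξ : ℤ) : ℝ) ^ 2))
      ≤ Real.sqrt ((1 / (4 * π ^ 2)) * V ^ 2) := Real.sqrt_le_sqrt hS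
    _ = (1 / (2 * π)) * V := by
        rw [show (1 / (4 * π ^ 2)) * V ^ 2 = ((1 / (2 * π)) * V) ^ 2 by ring]
        exact Real.sqrt_sq (by positivity)
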